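/- Let ε ∈ (0,1/2], k ≥ 1, let 𝒲 be a family of channels from [2k] to finite alphabets, and consider a deterministic sequentially interactive protocol over n users using 𝒲. Let Z be uniform on {−1,+1}^k and, conditionally on Z, let the inputs be i.i.d. with law p_Z; let q denote the resulting (mixture) distribution of the transcript Y^n. For a prefix y^t, let u(·|y^t) denote the distribution y ↦ (1/(2k)) Σ_{x∈[2k]} W^{y^t}(y|x) of the next message when the (t+1)-st input is uniform on [2k]. Then for every 0 ≤ t ≤ n−1: E_{Y^t ∼ q}[ KL( q(Y_{t+1} ∈ · | Y^t) ‖ u(· | Y^t) ) ] ≤ (4 ln 2) · (ε²/k) · ‖𝒲‖_op · Σ_{i=1}^k I(Z_i; Y^t), where the KL divergence is measured in nats and the mutual information in bits. -/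

import Mathlib

open Finset

namespace Paper

/-- A probability distribution on a finite type, given by its mass function. -/
def IsDist {α : Type*} [Fintype α] (p : α → ℝ) : Prop :=
  (∀ a, 0 ≤ p a) ∧ ∑ a, p a = 1

/-- A channel (row-stochastic kernel) from `α` to the finite alphabet `𝒴`. -/
def IsChannel {α 𝒴 : Type*} [Fintype α] [Fintype 𝒴] (W : α → 𝒴 → ℝ) : Prop :=
  ∀ x, IsDist (W x)

/-- Total variation distance between mass functions on a finite type. -/
noncomputable def tvDist {α : Type*} [Fintype α] (p q : α → ℝ) : ℝ :=
  (∑ a, |p a - q a|) / 2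

/-- The element `2i-1` (1-indexed) of `[2k]`, i.e. index `2i` in 0-indexed terms. -/
def lo {k : ℕ} (i : Fin k) : Fin (2 * k) := ⟨2 * i.val, by have := i.isLt; omega⟩

/-- The element `2i` (1-indexed) of `[2k]`, i.e. index `2i+1` in 0-indexed terms. -/
def hi {k : ℕ} (i : Fin k) : Fin (2 * k) := ⟨2 * i.val + 1, by have := i.isLt; omega⟩

/-- The channel information matrix `H(W)`  (division by `0` yields `0` in Lean,
matching the convention that terms with zero denominator vanish). -/
noncomputable def HMat (k : ℕ) {𝒴 : Type*} [Fintype 𝒴] (W : Fin (2 * k) → 𝒴 → ℝ) :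
    Matrix (Fin k) (Fin k) ℝ := fun i j =>
  ∑ y, (W (lo i) y - W (hi i) y) * (W (lo j) y - W (hi j) y) / (∑ x, W x y)

/-- Nuclear norm of a real symmetric matrix (sum of absolute values of eigenvalues). -/
noncomputable def nucNorm {k : ℕ} (A : Matrix (Fin k) (Fin k) ℝ) : ℝ :=
  if h : A.IsHermitian then ∑ i, |h.eigenvalues i| else 0

/-- Operator (spectral) norm of a real symmetric matrix. -/
noncomputable def opNorm {k : ℕ} (A : Matrix (Fin k) (Fin k) ℝ) : ℝ :=
  if h : A.IsHermitian then ⨆ i, |h.eigenvalues i| else 0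

/-- Frobenius norm of a matrix. -/
noncomputable def frobNorm {k : ℕ} (A : Matrix (Fin k) (Fin k) ℝ) : ℝ :=
  Real.sqrt (∑ i, ∑ j, (A i j) ^ 2)

/-- `‖𝒲‖_*`, the maximal nuclear norm of `H(W)` over the family. -/
noncomputable def famNuc (k : ℕ) {𝒴 : Type*} [Fintype 𝒴]
    (𝒲 : Set (Fin (2 * k) → 𝒴 → ℝ)) : ℝ :=
  sSup ((fun W => nucNorm (HMat k W)) '' 𝒲)

/-- `‖𝒲‖_op`, the maximal operator norm of `H(W)` over the family. -/
noncomputable def famOp (k : ℕ) {𝒴 : Type*} [Fintype 𝒴]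
    (𝒲 : Set (Fin (2 * k) → 𝒴 → ℝ)) : ℝ :=
  sSup ((fun W => opNorm (HMat k W)) '' 𝒲)

/-- `‖𝒲‖_F`, the maximal Frobenius norm of `H(W)` over the family. -/
noncomputable def famFrob (k : ℕ) {𝒴 : Type*} [Fintype 𝒴]
    (𝒲 : Set (Fin (2 * k) → 𝒴 → ℝ)) : ℝ :=
  sSup ((fun W => frobNorm (HMat k W)) '' 𝒲)

/-- A deterministic sequentially interactive protocol over `n` users: to each user `t`
and each message prefix it assigns a channel. -/
def Protocol (k n : ℕ) (𝒴 : Type*) : Type _ :=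
  (t : Fin n) → (Fin t.val → 𝒴) → Fin (2 * k) → 𝒴 → ℝ

/-- All channels used by the protocol belong to the family `𝒲`. -/
def UsesFamily {k n : ℕ} {𝒴 : Type*} (π : Protocol k n 𝒴)
    (𝒲 : Set (Fin (2 * k) → 𝒴 → ℝ)) : Prop :=
  ∀ t pre, π t pre ∈ 𝒲

/-- All kernels used by the protocol are genuine channels. -/
def ChannelProtocol {k n : ℕ} {𝒴 : Type*} [Fintype 𝒴] (π : Protocol k n 𝒴) : Prop :=
  ∀ t pre, IsChannel (π t pre)

/-- Distribution of the first `t` messages of the transcript when the inputs are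
i.i.d. with law `p`. -/
noncomputable def prefixDist {k n : ℕ} {𝒴 : Type*} [Fintype 𝒴] (π : Protocol k n 𝒴)
    (p : Fin (2 * k) → ℝ) (t : ℕ) (ht : t ≤ n) (y : Fin t → 𝒴) : ℝ :=
  ∏ s : Fin t, ∑ x, p x *
    π ⟨s.val, lt_of_lt_of_le s.isLt ht⟩ (fun r => y ⟨r.val, lt_trans r.isLt s.isLt⟩) x (y s)

/-- Distribution of the full transcript `Y^n` when the inputs are i.i.d. with law `p`. -/
noncomputable def transDist {k n : ℕ} {𝒴 : Type*} [Fintype 𝒴] (π : Protocol k n 𝒴)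
    (p : Fin (2 * k) → ℝ) (y : Fin n → 𝒴) : ℝ :=
  prefixDist π p n le_rfl y

/-- The uniform distribution on `[2k]`. -/
noncomputable def uniform2k (k : ℕ) : Fin (2 * k) → ℝ := fun _ => (2 * (k : ℝ))⁻¹

/-- An `(n, ε)`-estimator using `𝒲`: a public-coin sequentially interactive protocol
(seed distribution `μ`, protocols `π u`, channels from `𝒲`) together with an estimator
`est` such that, for every input distribution `p`, the probability that the estimate is
more than `ε` away from `p` in total variation is at most `1/100`. -/
def IsEstimator {k n : ℕ} {𝒴 𝒰 : Type*} [Fintype 𝒴] [Fintype 𝒰]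
    (𝒲 : Set (Fin (2 * k) → 𝒴 → ℝ)) (μ : 𝒰 → ℝ) (π : 𝒰 → Protocol k n 𝒴)
    (est : (Fin n → 𝒴) → 𝒰 → Fin (2 * k) → ℝ) (ε : ℝ) : Prop :=
  IsDist μ ∧ (∀ u, UsesFamily (π u) 𝒲) ∧ (∀ u, ChannelProtocol (π u)) ∧
  (∀ y u, IsDist (est y u)) ∧
  ∀ p : Fin (2 * k) → ℝ, IsDist p →
    (∑ u, ∑ y : Fin n → 𝒴, μ u * (transDist (π u) p y *
      (if ε < tvDist (est y u) p then (1 : ℝ) else 0))) ≤ 1 / 100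

/-- An `(n, ε)`-uniformity test using `𝒲`: a public-coin sequentially interactive
protocol together with a randomized decision rule `T` (probability of output `1`)
accepting uniform and rejecting `ε`-far distributions with probability `99/100`. -/
def IsUnifTest {k n : ℕ} {𝒴 𝒰 : Type*} [Fintype 𝒴] [Fintype 𝒰]
    (𝒲 : Set (Fin (2 * k) → 𝒴 → ℝ)) (μ : 𝒰 → ℝ) (π : 𝒰 → Protocol k n 𝒴)
    (T : (Fin n → 𝒴) → 𝒰 → ℝ) (ε : ℝ) : Prop :=
  IsDist μ ∧ (∀ u, UsesFamily (π u) 𝒲) ∧ (∀ u, ChannelProtocol (π u)) ∧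
  (∀ y u, T y u ∈ Set.Icc (0 : ℝ) 1) ∧
  (99 / 100 ≤ ∑ u, ∑ y : Fin n → 𝒴, μ u * (transDist (π u) (uniform2k k) y * (1 - T y u))) ∧
  ∀ p : Fin (2 * k) → ℝ, IsDist p → ε ≤ tvDist p (uniform2k k) →
    99 / 100 ≤ ∑ u, ∑ y : Fin n → 𝒴, μ u * (transDist (π u) p y * T y u)

/-- Mutual information (in nats) of a joint mass function on `A × B`. -/
noncomputable def miNats {A B : Type*} [Fintype A] [Fintype B] (j : A → B → ℝ) : ℝ :=
  ∑ a, ∑ b, j a b * Real.log (j a b / ((∑ b', j a b') * (∑ a', j a' b)))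

/-- Mutual information (in bits) of a joint mass function on `A × B`. -/
noncomputable def miBits {A B : Type*} [Fintype A] [Fintype B] (j : A → B → ℝ) : ℝ :=
  ∑ a, ∑ b, j a b * Real.logb 2 (j a b / ((∑ b', j a b') * (∑ a', j a' b)))

/-- Binary entropy function (in bits). -/
noncomputable def binEnt (t : ℝ) : ℝ :=
  -(t * Real.logb 2 t) - (1 - t) * Real.logb 2 (1 - t)

/-- `±1` encoding of a Boolean. -/
def pm (b : Bool) : ℝ := if b then 1 else -1

/-- The joint mass function of `(Z_i, Y)` obtained from a joint mass function of `(Z, Y)`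
for `Z ∈ {−1,+1}^k` (encoded via Booleans). -/
noncomputable def coordJoint {k : ℕ} {𝒴 : Type*} [Fintype 𝒴]
    (j : (Fin k → Bool) → 𝒴 → ℝ) (i : Fin k) : Bool → 𝒴 → ℝ :=
  fun b y => ∑ z : Fin k → Bool, if z i = b then j z y else 0

/-- The Paninski perturbation `p_z` of the uniform distribution on `[2k]`:
`p_z(2i−1) = (1+2ε z_i)/(2k)` and `p_z(2i) = (1−2ε z_i)/(2k)` (1-indexed). -/
noncomputable def paninski (k : ℕ) (ε : ℝ) (z : Fin k → Bool) : Fin (2 * k) → ℝ :=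
  fun x => (1 + (if x.val % 2 = 0 then (1 : ℝ) else -1) * (2 * ε) *
    pm (z ⟨x.val / 2, by have := x.isLt; omega⟩)) / (2 * k)

/-- Chi-square divergence between mass functions on a finite type. -/
noncomputable def chiSq {α : Type*} [Fintype α] (P Q : α → ℝ) : ℝ :=
  ∑ y, (P y - Q y) ^ 2 / Q y

/-- Kullback–Leibler divergence (in nats) between mass functions on a finite type. -/
noncomputable def klDivNats {α : Type*} [Fintype α] (P Q : α → ℝ) : ℝ :=
  ∑ y, P y * Real.log (P y / Q y)

/-- The leaky-query channel `W_u^η` on output alphabet `[2k] ∪ {1*, 0*}`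
(`Sum.inr true = 1*`, `Sum.inr false = 0*`). -/
noncomputable def leaky (k : ℕ) (η : ℝ) (u : Fin (2 * k) → ℝ) :
    Fin (2 * k) → (Fin (2 * k) ⊕ Bool) → ℝ :=
  fun x y => Sum.elim (fun x' => if x' = x then η else 0)
    (fun b => if b then (1 - η) * u x else (1 - η) * (1 - u x)) y

/-- The vector `δ(u)` associated with a leaky-query channel. -/
noncomputable def leakyDelta (k : ℕ) (u : Fin (2 * k) → ℝ) : Fin k → ℝ :=
  fun i => (u (lo i) - u (hi i)) *
    Real.sqrt ((2 * (k : ℝ)) / ((∑ x, u x) * (2 * (k : ℝ) - ∑ x, u x)))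

/-- The partial-erasure channel `W_{x*}` on output alphabet `[2k] ∪ {⊥}`. -/
noncomputable def eraseCh (k : ℕ) (η : ℝ) (xs : Fin (2 * k)) :
    Fin (2 * k) → (Fin (2 * k) ⊕ Unit) → ℝ :=
  fun x y => Sum.elim (fun x' => if x' = x then (if x = xs then 1 else η) else 0)
    (fun _ => if x = xs then 0 else 1 - η) y

/-- The family of all `ρ`-locally differentially private channels from `[2k]` to `𝒴`. -/
def ldpFamily (k : ℕ) {𝒴 : Type*} [Fintype 𝒴] (ρ : ℝ) :
    Set (Fin (2 * k) → 𝒴 → ℝ) :=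
  { W | IsChannel W ∧ ∀ x x' y, W x y ≤ Real.exp ρ * W x' y }


section Aux

variable {k : ℕ}

/-- pairing equivalence -/
def pairEquiv (k : ℕ) : Fin k × Bool ≃ Fin (2 * k) where
  toFun p := if p.2 then hi p.1 else lo p.1
  invFun x := (⟨x.val / 2, by have := x.isLt; omega⟩, decide (x.val % 2 = 1))
  left_inv := by
    rintro ⟨i, b⟩
    cases b <;> simp [lo, hi] <;>
      exact Fin.ext (by simp; omega)
  right_inv := by
    rintro ⟨x, hx⟩
    by_cases h : x % 2 = 1 <;> simp [h, lo, hi] <;> omega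

lemma sum_pair (g : Fin (2 * k) → ℝ) :
    ∑ x, g x = ∑ i : Fin k, (g (lo i) + g (hi i)) := by
  rw [← Fintype.sum_equiv (pairEquiv k) _ (fun x => g x) (fun p => rfl)]
  rw [Fintype.sum_prod_type]
  refine Finset.sum_congr rfl fun i _ => ?_
  simp [pairEquiv]
  ring

lemma lo_val (i : Fin k) : (lo i).val = 2 * i.val := rfl
lemma hi_val (i : Fin k) : (hi i).val = 2 * i.val + 1 := rfl

lemma paninski_lo (hk : 1 ≤ k) (ε : ℝ) (z : Fin k → Bool) (i : Fin k) :
    paninski k ε z (lo i) = (2 * (k:ℝ))⁻¹ + (ε / k) * pm (z i) := by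
  have hk0 : (k:ℝ) ≠ 0 := Nat.cast_ne_zero.mpr (by omega)
  have h2 : (lo i).val % 2 = 0 := by rw [lo_val]; omega
  have hidx : (⟨(lo i).val / 2, by have := (lo i).isLt; omega⟩ : Fin k) = i := by
    apply Fin.ext; simp only [lo_val]; omega
  rw [paninski, if_pos h2, hidx]
  field_simp

lemma paninski_hi (hk : 1 ≤ k) (ε : ℝ) (z : Fin k → Bool) (i : Fin k) :
    paninski k ε z (hi i) = (2 * (k:ℝ))⁻¹ - (ε / k) * pm (z i) := by
  have hk0 : (k:ℝ) ≠ 0 := Nat.cast_ne_zero.mpr (by omega)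
  have h2 : ¬ ((hi i).val % 2 = 0) := by rw [hi_val]; omega
  have hidx : (⟨(hi i).val / 2, by have := (hi i).isLt; omega⟩ : Fin k) = i := by
    apply Fin.ext; simp only [hi_val]; omega
  rw [paninski, if_neg h2, hidx]
  field_simp
  ring

lemma pm_abs (b : Bool) : |pm b| = 1 := by cases b <;> simp [pm]

lemma paninski_isDist (hk : 1 ≤ k) (ε : ℝ) (hε : 0 < ε) (hε' : ε ≤ 1/2) (z : Fin k → Bool) :
    IsDist (paninski k ε z) := by
  have hk0 : (0:ℝ) < (k:ℝ) := by exact_mod_cast Nat.pos_of_ne_zero (by omega)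
  constructor
  · intro x
    rw [paninski]
    apply div_nonneg _ (by positivity)
    have key : ∀ c b : ℝ, |c| = 1 → |b| = 1 → 0 ≤ 1 + c * (2 * ε) * b := by
      intro c b hc hb
      rcases (abs_eq (by norm_num : (0:ℝ) ≤ 1)).mp hc with h | h <;>
        rcases (abs_eq (by norm_num : (0:ℝ) ≤ 1)).mp hb with h' | h' <;>
          rw [h, h'] <;> nlinarith
    exact key _ _ (by split <;> simp) (pm_abs _)
  · rw [sum_pair (g := paninski k ε z)]
    have : ∀ i : Fin k, paninski k ε z (lo i) + paninski k ε z (hi i) = (k:ℝ)⁻¹ := by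
      intro i
      rw [paninski_lo hk, paninski_hi hk, mul_inv]
      ring
    rw [Finset.sum_congr rfl (fun i _ => this i)]
    rw [Finset.sum_const, Finset.card_univ, Fintype.card_fin, nsmul_eq_mul]
    field_simp

lemma count_half (hk : 1 ≤ k) (i : Fin k) (b : Bool) (c : ℝ) :
    ∑ z : Fin k → Bool, (if z i = b then c else 0) = c * 2^(k-1) := by
  classical
  rw [← Fintype.sum_equiv ((Equiv.funSplitAt i Bool).symm)
      (fun p => if ((Equiv.funSplitAt i Bool).symm p) i = b then c else 0)
      (fun z => if z i = b then c else 0) (fun p => rfl)]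
  have hpt : ∀ p : Bool × ({ j // j ≠ i } → Bool),
      ((Equiv.funSplitAt i Bool).symm p) i = p.1 := by
    intro p
    simp [Equiv.funSplitAt, Equiv.piSplitAt]
  rw [Finset.sum_congr rfl (fun p _ => by rw [hpt p])]
  rw [Fintype.sum_prod_type]
  have hcard : Fintype.card ({ j // j ≠ i } → Bool) = 2^(k-1) := by
    rw [Fintype.card_fun, Fintype.card_bool]
    congr 1
    have : Fintype.card { j // j ≠ i } = Fintype.card (Fin k) - Fintype.card { j : Fin k // j = i } := by
      exact Fintype.card_subtype_compl _
    rw [this, Fintype.card_subtype_eq, Fintype.card_fin]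
  have hinner : ∀ b' : Bool, ∑ _g : { j // j ≠ i } → Bool, (if b' = b then c else 0)
      = (if b' = b then c else 0) * 2^(k-1) := by
    intro b'
    rw [Finset.sum_const, Finset.card_univ, hcard, nsmul_eq_mul]
    push_cast
    ring
  rw [Fintype.sum_bool, hinner, hinner]
  cases b <;> simp

end Aux

section PrefixAux

variable {k n : ℕ} {𝒴 : Type*} [Fintype 𝒴]

lemma snoc_mk_lt {t : ℕ} (ys : Fin t → 𝒴) (y : 𝒴) (a : ℕ) (h1 : a < t + 1) (h2 : a < t) :
    (Fin.snoc ys y : Fin (t+1) → 𝒴) ⟨a, h1⟩ = ys ⟨a, h2⟩ := by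
  have : (⟨a, h1⟩ : Fin (t+1)) = Fin.castSucc ⟨a, h2⟩ := by
    apply Fin.ext; rfl
  rw [this, Fin.snoc_castSucc]

lemma prefixDist_snoc (π : Protocol k n 𝒴) (p : Fin (2*k) → ℝ) (t : ℕ) (ht : t < n)
    (ys : Fin t → 𝒴) (y : 𝒴) :
    prefixDist π p (t+1) ht (Fin.snoc ys y)
      = prefixDist π p t ht.le ys * ∑ x, p x * π ⟨t, ht⟩ ys x y := by
  rw [prefixDist, prefixDist, Fin.prod_univ_castSucc]
  congr 1
  · refine Finset.prod_congr rfl fun s _ => ?_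
    refine Finset.sum_congr rfl fun x _ => ?_
    have e2 : (fun r : Fin (Fin.castSucc s).val =>
          (Fin.snoc ys y : Fin (t+1) → 𝒴) ⟨r.val, lt_trans r.isLt (Fin.castSucc s).isLt⟩)
        = (fun r : Fin (Fin.castSucc s).val => ys ⟨r.val, lt_trans r.isLt s.isLt⟩) :=
      funext fun r => snoc_mk_lt ys y r.val _ _
    rw [e2, Fin.snoc_castSucc]
    rfl
  · refine Finset.sum_congr rfl fun x _ => ?_
    have e2 : (fun r : Fin (Fin.last t).val =>
          (Fin.snoc ys y : Fin (t+1) → 𝒴) ⟨r.val, lt_trans r.isLt (Fin.last t).isLt⟩)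
        = (fun r : Fin (Fin.last t).val => ys ⟨r.val, r.isLt⟩) :=
      funext fun r => snoc_mk_lt ys y r.val _ r.isLt
    rw [e2, Fin.snoc_last]
    rfl

lemma prefixDist_nonneg (π : Protocol k n 𝒴) (hch : ChannelProtocol π)
    (p : Fin (2*k) → ℝ) (hp : ∀ x, 0 ≤ p x) (t : ℕ) (ht : t ≤ n) (ys : Fin t → 𝒴) :
    0 ≤ prefixDist π p t ht ys := by
  rw [prefixDist]
  apply Finset.prod_nonneg
  intro s _
  apply Finset.sum_nonneg
  intro x _
  exact mul_nonneg (hp x) (((hch _ _) x).1 _)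

def snocEquiv (t : ℕ) (𝒴 : Type*) : ((Fin t → 𝒴) × 𝒴) ≃ (Fin (t+1) → 𝒴) where
  toFun p := Fin.snoc p.1 p.2
  invFun f := (Fin.init f, f (Fin.last t))
  left_inv := by
    rintro ⟨ys, y⟩
    simp [Fin.init_snoc, Fin.snoc_last]
  right_inv := by
    intro f
    simp [Fin.snoc_init_self]

lemma sum_snoc {t : ℕ} (F : (Fin (t+1) → 𝒴) → ℝ) :
    ∑ f : Fin (t+1) → 𝒴, F f = ∑ ys : Fin t → 𝒴, ∑ y : 𝒴, F (Fin.snoc ys y) := by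
  classical
  rw [← Fintype.sum_equiv (snocEquiv t 𝒴) (fun p => F (Fin.snoc p.1 p.2)) F (fun p => rfl)]
  rw [Fintype.sum_prod_type]

lemma prefixDist_sum_one (π : Protocol k n 𝒴) (hch : ChannelProtocol π)
    (p : Fin (2*k) → ℝ) (hp : IsDist p) :
    ∀ t (ht : t ≤ n), ∑ ys : Fin t → 𝒴, prefixDist π p t ht ys = 1 := by
  intro t
  induction t with
  | zero =>
    intro ht
    have : ∀ ys : Fin 0 → 𝒴, prefixDist π p 0 ht ys = 1 := by
      intro ys; rw [prefixDist]; simp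
    rw [Finset.sum_congr rfl (fun ys _ => this ys)]
    simp
  | succ t ih =>
    intro ht
    have ht' : t < n := ht
    rw [sum_snoc (fun f => prefixDist π p (t+1) ht f)]
    have : ∀ ys : Fin t → 𝒴, ∑ y : 𝒴, prefixDist π p (t+1) ht (Fin.snoc ys y)
        = prefixDist π p t ht'.le ys := by
      intro ys
      have h1 : ∀ y : 𝒴, prefixDist π p (t+1) ht (Fin.snoc ys y)
          = prefixDist π p t ht'.le ys * ∑ x, p x * π ⟨t, ht'⟩ ys x y :=
        fun y => prefixDist_snoc π p t ht' ys y
      rw [Finset.sum_congr rfl (fun y _ => h1 y), ← Finset.mul_sum]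
      have h2 : ∑ y : 𝒴, ∑ x, p x * π ⟨t, ht'⟩ ys x y = 1 := by
        rw [Finset.sum_comm]
        have h3 : ∀ x, ∑ y : 𝒴, p x * π ⟨t, ht'⟩ ys x y = p x := by
          intro x
          rw [← Finset.mul_sum, ((hch _ _) x).2, mul_one]
        rw [Finset.sum_congr rfl (fun x _ => h3 x), hp.2]
      rw [h2, mul_one]
    rw [Finset.sum_congr rfl (fun ys _ => this ys)]
    exact ih ht'.le

end PrefixAux

section Spectral

lemma parseval {k : ℕ} (b : OrthonormalBasis (Fin k) ℝ (EuclideanSpace ℝ (Fin k)))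
    (v : EuclideanSpace ℝ (Fin k)) :
    ∑ i, (inner ℝ (b i) v : ℝ)^2 = ∑ i, (v i)^2 := by
  have h1 : ‖v‖^2 = ∑ i, (v i)^2 := by
    rw [EuclideanSpace.norm_eq, Real.sq_sqrt (by positivity)]
    simp [sq_abs]
  have h2 : ‖b.repr v‖ = ‖v‖ := b.repr.norm_map v
  have h3 : ‖b.repr v‖^2 = ∑ i, (b.repr v i)^2 := by
    rw [EuclideanSpace.norm_eq, Real.sq_sqrt (by positivity)]
    simp [sq_abs]
  rw [← h1, ← h2, h3]
  exact Finset.sum_congr rfl fun i _ => by rw [b.repr_apply_apply v i]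

lemma opNorm_nonneg {k : ℕ} (A : Matrix (Fin k) (Fin k) ℝ) : 0 ≤ opNorm A := by
  rw [opNorm]
  split
  · exact Real.iSup_nonneg (fun i => abs_nonneg _)
  · exact le_refl 0

lemma quadform {k : ℕ} (A : Matrix (Fin k) (Fin k) ℝ) (hA : A.IsHermitian) (x : Fin k → ℝ) :
    ∑ i, x i * A.mulVec x i ≤ opNorm A * ∑ i, x i ^ 2 := by
  classical
  set b := hA.eigenvectorBasis with hb
  set lam := hA.eigenvalues with hlam
  set v : EuclideanSpace ℝ (Fin k) := WithLp.toLp 2 x with hv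
  set c : Fin k → ℝ := fun i => (inner ℝ (b i) v : ℝ) with hc
  have hrepr : v = ∑ i, c i • b i := by
    rw [hc]; exact (b.sum_repr' v).symm
  have hmv : ∀ i, A.mulVec x i = ∑ j, c j * (lam j * b j i) := by
    intro i
    have h0 : A.mulVec x = A.mulVecLin v := by rw [Matrix.mulVecLin_apply]
    rw [h0, hrepr, WithLp.ofLp_sum, map_sum]
    have h1 : ∀ j, A.mulVecLin (c j • b j).ofLp = c j • (lam j • (b j : EuclideanSpace ℝ (Fin k)).ofLp) := by
      intro j
      rw [WithLp.ofLp_smul, map_smul, Matrix.mulVecLin_apply]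
      congr 1
      exact hA.mulVec_eigenvectorBasis j
    rw [Finset.sum_congr rfl (fun j _ => h1 j)]
    simp [Finset.sum_apply, smul_eq_mul]
  have hcj : ∀ j, c j = ∑ i, x i * b j i := by
    intro j
    rw [hc]
    simp only [PiLp.inner_apply, RCLike.inner_apply, starRingEnd_apply, star_trivial]
    exact Finset.sum_congr rfl fun i _ => rfl
  have hdot : ∑ i, x i * A.mulVec x i = ∑ j, lam j * (c j)^2 := by
    calc ∑ i, x i * A.mulVec x i = ∑ i, ∑ j, x i * (c j * (lam j * b j i)) := by
          refine Finset.sum_congr rfl fun i _ => ?_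
          rw [hmv i, Finset.mul_sum]
      _ = ∑ j, ∑ i, x i * (c j * (lam j * b j i)) := Finset.sum_comm
      _ = ∑ j, lam j * ((c j) * ∑ i, x i * b j i) := by
          refine Finset.sum_congr rfl fun j _ => ?_
          rw [Finset.mul_sum, Finset.mul_sum]
          exact Finset.sum_congr rfl fun i _ => by ring
      _ = ∑ j, lam j * (c j)^2 := by
          refine Finset.sum_congr rfl fun j _ => ?_
          rw [← hcj j]; ring
  have hbound : ∀ i, |lam i| ≤ opNorm A := by
    intro i
    rw [opNorm, dif_pos hA]
    exact le_ciSup (f := fun i => |hA.eigenvalues i|) (Set.Finite.bddAbove (Set.finite_range _)) i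
  rw [hdot]
  calc ∑ j, lam j * (c j)^2 ≤ ∑ j, opNorm A * (c j)^2 := by
        refine Finset.sum_le_sum fun j _ => ?_
        exact (mul_le_mul_of_nonneg_right (le_abs_self _) (sq_nonneg _)).trans
          (mul_le_mul_of_nonneg_right (hbound j) (sq_nonneg _))
    _ = opNorm A * ∑ j, (c j)^2 := by rw [Finset.mul_sum]
    _ = opNorm A * ∑ i, x i ^ 2 := by rw [hc, parseval b v]

lemma eig_bound {k : ℕ} (A : Matrix (Fin k) (Fin k) ℝ) (hA : A.IsHermitian) (C : ℝ)
    (hC : ∀ i j, |A i j| ≤ C) (j : Fin k) : |hA.eigenvalues j| ≤ k * C := by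
  classical
  set u : Fin k → ℝ := fun i => hA.eigenvectorBasis j i with hu
  have hnorm1 : ‖hA.eigenvectorBasis j‖ = 1 := hA.eigenvectorBasis.orthonormal.1 j
  have hsq : ∑ i, (u i)^2 = 1 := by
    have h2 : ‖hA.eigenvectorBasis j‖^2 = 1 := by rw [hnorm1]; norm_num
    rw [← h2, EuclideanSpace.norm_eq, Real.sq_sqrt (by positivity)]
    exact Finset.sum_congr rfl fun i _ => by
      rw [hu]; simp [Real.norm_eq_abs, sq_abs]
  have heig : ∀ i, A.mulVec u i = hA.eigenvalues j * u i := by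
    intro i
    exact congrFun (hA.mulVec_eigenvectorBasis j) i
  have hval : hA.eigenvalues j = ∑ i, u i * (A.mulVec u) i := by
    have : ∑ i, u i * (A.mulVec u) i = hA.eigenvalues j * ∑ i, (u i)^2 := by
      rw [Finset.mul_sum]
      exact Finset.sum_congr rfl fun i _ => by rw [heig i]; ring
    rw [this, hsq, mul_one]
  have hCnn : 0 ≤ C := le_trans (abs_nonneg _) (hC j j)
  have habs : ∀ i, |(A.mulVec u) i| ≤ C * ∑ l, |u l| := by
    intro i
    calc |(A.mulVec u) i| = |∑ l, A i l * u l| := rfl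
      _ ≤ ∑ l, |A i l * u l| := Finset.abs_sum_le_sum_abs _ _
      _ ≤ ∑ l, C * |u l| := Finset.sum_le_sum fun l _ => by
          rw [abs_mul]; exact mul_le_mul_of_nonneg_right (hC i l) (abs_nonneg _)
      _ = C * ∑ l, |u l| := by rw [Finset.mul_sum]
  have hsum_abs : (∑ i, |u i|)^2 ≤ k * ∑ i, (u i)^2 := by
    have h := sq_sum_le_card_mul_sum_sq (s := Finset.univ) (f := fun i => |u i|)
    simpa [sq_abs] using h
  calc |hA.eigenvalues j| = |∑ i, u i * (A.mulVec u) i| := by rw [← hval]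
    _ ≤ ∑ i, |u i * (A.mulVec u) i| := Finset.abs_sum_le_sum_abs _ _
    _ ≤ ∑ i, |u i| * (C * ∑ l, |u l|) := Finset.sum_le_sum fun i _ => by
        rw [abs_mul]; exact mul_le_mul_of_nonneg_left (habs i) (abs_nonneg _)
    _ = C * (∑ i, |u i|)^2 := by rw [← Finset.sum_mul]; ring
    _ ≤ C * (k * ∑ i, (u i)^2) := mul_le_mul_of_nonneg_left hsum_abs hCnn
    _ = k * C := by rw [hsq]; ring

lemma opNorm_le {k : ℕ} (A : Matrix (Fin k) (Fin k) ℝ) (hA : A.IsHermitian) (C : ℝ)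
    (hC : ∀ i j, |A i j| ≤ C) (hk : 0 < k) : opNorm A ≤ k * C := by
  rw [opNorm, dif_pos hA]
  have : Nonempty (Fin k) := ⟨⟨0, hk⟩⟩
  exact ciSup_le fun j => eig_bound A hA C hC j

lemma HMat_isHermitian (k : ℕ) {𝒴 : Type*} [Fintype 𝒴] (W : Fin (2*k) → 𝒴 → ℝ) :
    (HMat k W).IsHermitian := by
  show (HMat k W).conjTranspose = HMat k W
  ext i j
  rw [Matrix.conjTranspose_apply]
  show star (HMat k W j i) = HMat k W i j
  rw [star_trivial, HMat, HMat]
  exact Finset.sum_congr rfl fun y _ => by ring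

lemma HMat_entry_bound (k : ℕ) {𝒴 : Type*} [Fintype 𝒴] (W : Fin (2*k) → 𝒴 → ℝ)
    (hW : IsChannel W) (i j : Fin k) : |HMat k W i j| ≤ 2 := by
  have key : ∀ y : 𝒴, |(W (lo i) y - W (hi i) y) * (W (lo j) y - W (hi j) y) / (∑ x, W x y)|
      ≤ |W (lo i) y - W (hi i) y| := by
    intro y
    rcases eq_or_lt_of_le (Finset.sum_nonneg (fun x _ => (hW x).1 y)) with h | h
    · rw [← h, div_zero, abs_zero]
      exact abs_nonneg _
    · have hdj : |W (lo j) y - W (hi j) y| ≤ ∑ x, W x y := by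
        have h1 : W (lo j) y + W (hi j) y ≤ ∑ x, W x y := by
          have hsub : ({lo j, hi j} : Finset (Fin (2*k))) ⊆ Finset.univ := Finset.subset_univ _
          have hne : lo j ≠ hi j := by
            intro hcon
            have := congrArg Fin.val hcon
            simp [lo_val, hi_val] at this
          calc W (lo j) y + W (hi j) y = ∑ x ∈ ({lo j, hi j} : Finset (Fin (2*k))), W x y := by
                rw [Finset.sum_pair hne]
            _ ≤ ∑ x, W x y := Finset.sum_le_sum_of_subset_of_nonneg hsub
                (fun x _ _ => (hW x).1 y)
        exact abs_le.mpr ⟨by linarith [(hW (lo j)).1 y, (hW (hi j)).1 y], by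
          linarith [(hW (lo j)).1 y, (hW (hi j)).1 y]⟩
      rw [abs_div, abs_mul, abs_of_pos h]
      rw [div_le_iff₀ h]
      exact mul_le_mul_of_nonneg_left hdj (abs_nonneg _)
  calc |HMat k W i j| ≤ ∑ y, |(W (lo i) y - W (hi i) y) * (W (lo j) y - W (hi j) y) / (∑ x, W x y)| :=
        Finset.abs_sum_le_sum_abs _ _
    _ ≤ ∑ y, |W (lo i) y - W (hi i) y| := Finset.sum_le_sum fun y _ => key y
    _ ≤ ∑ y, (W (lo i) y + W (hi i) y) := Finset.sum_le_sum fun y _ =>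
        abs_le.mpr ⟨by linarith [(hW (lo i)).1 y, (hW (hi i)).1 y], by
          linarith [(hW (lo i)).1 y, (hW (hi i)).1 y]⟩
    _ = 2 := by rw [Finset.sum_add_distrib, (hW (lo i)).2, (hW (hi i)).2]; norm_num

lemma miBits_eq_miNats {A B : Type*} [Fintype A] [Fintype B] (j : A → B → ℝ) :
    miBits j = miNats j / Real.log 2 := by
  rw [miBits, miNats, Finset.sum_div]
  refine Finset.sum_congr rfl fun a _ => ?_
  rw [Finset.sum_div]
  refine Finset.sum_congr rfl fun b _ => ?_
  rw [Real.logb, mul_div_assoc]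

end Spectral

section Analytic

lemma mono_aux {g G : ℝ → ℝ} (hd : ∀ x ∈ Set.Ioo (-1:ℝ) 1, HasDerivAt g (G x) x)
    (hG : ∀ x ∈ Set.Ioo (0:ℝ) 1, 0 ≤ G x) : ∀ r ∈ Set.Ico (0:ℝ) 1, g 0 ≤ g r := by
  intro r hr
  rcases eq_or_lt_of_le hr.1 with h | h
  · rw [← h]
  have hmono : MonotoneOn g (Set.Icc 0 r) := by
    apply monotoneOn_of_deriv_nonneg (convex_Icc 0 r)
    · intro x hx
      exact (hd x ⟨by linarith [hx.1], lt_of_le_of_lt hx.2 hr.2⟩).continuousAt.continuousWithinAt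
    · intro x hx
      rw [interior_Icc] at hx
      exact (hd x ⟨by linarith [hx.1], lt_trans hx.2 hr.2⟩).differentiableAt.differentiableWithinAt
    · intro x hx
      rw [interior_Icc] at hx
      rw [(hd x ⟨by linarith [hx.1], lt_trans hx.2 hr.2⟩).deriv]
      exact hG x ⟨hx.1, lt_trans hx.2 hr.2⟩
  exact hmono ⟨le_refl 0, hr.1⟩ ⟨hr.1, le_refl r⟩ hr.1

lemma log_diff_ge (r : ℝ) (hr : r ∈ Set.Ico (0:ℝ) 1) :
    2 * r ≤ Real.log (1 + r) - Real.log (1 - r) := by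
  have := mono_aux (g := fun x => Real.log (1+x) - Real.log (1-x) - 2*x)
      (G := fun x => (1+x)⁻¹ + (1-x)⁻¹ - 2) ?_ ?_ r hr
  · simp at this; linarith
  · intro x hx
    have h1 : (1:ℝ) + x ≠ 0 := by rcases hx with ⟨a,b⟩; intro h; linarith
    have h2 : (1:ℝ) - x ≠ 0 := by rcases hx with ⟨a,b⟩; intro h; linarith
    have d1 : HasDerivAt (fun x : ℝ => Real.log (1+x)) ((1+x)⁻¹) x := by
      simpa [Function.comp_def] using (Real.hasDerivAt_log h1).comp x ((hasDerivAt_id x).const_add 1)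
    have d2 : HasDerivAt (fun x : ℝ => Real.log (1-x)) (-(1-x)⁻¹) x := by
      have := (Real.hasDerivAt_log h2).comp x ((hasDerivAt_id x).neg.const_add 1)
      simpa [Function.comp_def] using this
    have d3 : HasDerivAt (fun x : ℝ => 2*x) 2 x := by
      simpa using (hasDerivAt_id x).const_mul 2
    have := (d1.sub d2).sub d3
    exact this.congr_deriv (by ring)
  · intro x hx
    rcases hx with ⟨hx0, hx1⟩
    have h1 : (0:ℝ) < 1 + x := by linarith
    have h2 : (0:ℝ) < 1 - x := by linarith
    have e1 : (1+x)⁻¹ = 1/(1+x) := by rw [inv_eq_one_div]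
    have e2 : (1-x)⁻¹ = 1/(1-x) := by rw [inv_eq_one_div]
    show (0:ℝ) ≤ (1 + x)⁻¹ + (1 - x)⁻¹ - 2
    rw [e1, e2, div_add_div _ _ (ne_of_gt h1) (ne_of_gt h2), sub_nonneg, le_div_iff₀ (by positivity)]
    nlinarith

lemma core_ineq (r : ℝ) (hr : r ∈ Set.Icc (-1:ℝ) 1) :
    r^2 ≤ (1+r) * Real.log (1+r) + (1-r) * Real.log (1-r) := by
  -- reduce to r ∈ [0,1] by symmetry
  have key : ∀ s ∈ Set.Icc (0:ℝ) 1, s^2 ≤ (1+s) * Real.log (1+s) + (1-s) * Real.log (1-s) := by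
    intro s hs
    rcases eq_or_lt_of_le hs.2 with h | h
    · subst h
      have hl2 : (0.6931471803 : ℝ) < Real.log 2 := Real.log_two_gt_d9
      norm_num
      nlinarith
    · have := mono_aux (g := fun x => (1+x) * Real.log (1+x) + (1-x) * Real.log (1-x) - x^2)
          (G := fun x => Real.log (1+x) - Real.log (1-x) - 2*x) ?_ ?_ s ⟨hs.1, h⟩
      · simp at this; linarith
      · intro x hx
        have h1 : (1:ℝ) + x ≠ 0 := by rcases hx with ⟨a,b⟩; intro hh; linarith
        have h2 : (1:ℝ) - x ≠ 0 := by rcases hx with ⟨a,b⟩; intro hh; linarith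
        have d1 : HasDerivAt (fun x : ℝ => Real.log (1+x)) ((1+x)⁻¹) x := by
          simpa [Function.comp_def] using (Real.hasDerivAt_log h1).comp x ((hasDerivAt_id x).const_add 1)
        have d2 : HasDerivAt (fun x : ℝ => Real.log (1-x)) (-(1-x)⁻¹) x := by
          simpa [Function.comp_def] using (Real.hasDerivAt_log h2).comp x ((hasDerivAt_id x).neg.const_add 1)
        have dA : HasDerivAt (fun x : ℝ => (1+x) * Real.log (1+x))
            (1 * Real.log (1+x) + (1+x) * (1+x)⁻¹) x :=
          (((hasDerivAt_id x).const_add 1)).mul d1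
        have dB : HasDerivAt (fun x : ℝ => (1-x) * Real.log (1-x))
            ((-1) * Real.log (1-x) + (1-x) * (-(1-x)⁻¹)) x := by
          have : HasDerivAt (fun x : ℝ => 1 - x) (-1) x := by
            simpa using ((hasDerivAt_id x).const_sub 1)
          exact this.mul d2
        have dC : HasDerivAt (fun x : ℝ => x^2) (2*x) x := by
          simpa using (hasDerivAt_pow 2 x)
        have := (dA.add dB).sub dC
        exact this.congr_deriv (by field_simp; ring)
      · intro x hx
        have := log_diff_ge x ⟨le_of_lt hx.1, hx.2⟩
        show (0:ℝ) ≤ Real.log (1+x) - Real.log (1-x) - 2*x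
        linarith
  rcases le_or_gt 0 r with h | h
  · exact key r ⟨h, hr.2⟩
  · have := key (-r) ⟨by linarith, by linarith [hr.1]⟩
    rw [show (1:ℝ)+-r = 1-r by ring, show (1:ℝ)- -r=1+r by ring, show (-r)^2 = r^2 by ring] at this
    linarith [this]


lemma binPinsker (a b : ℝ) (ha : 0 ≤ a) (hb : 0 ≤ b) :
    (a-b)^2/(2*(a+b)) ≤ a * Real.log (a/((1/2)*(a+b))) + b * Real.log (b/((1/2)*(a+b))) := by
  rcases eq_or_lt_of_le (by linarith : (0:ℝ) ≤ a + b) with hs | hs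
  · have ha0 : a = 0 := by linarith
    have hb0 : b = 0 := by linarith
    simp [ha0, hb0]
  set s := a + b with hsdef
  set r := (a-b)/s with hrdef
  have hsne : s ≠ 0 := ne_of_gt hs
  have hr : r ∈ Set.Icc (-1:ℝ) 1 := by
    constructor
    · rw [hrdef, le_div_iff₀ hs]; linarith
    · rw [hrdef, div_le_iff₀ hs]; linarith
  have ea : a = s*(1+r)/2 := by rw [hrdef]; field_simp; rw [hsdef]; ring
  have eb : b = s*(1-r)/2 := by rw [hrdef]; field_simp; rw [hsdef]; ring
  have hA : a/((1/2)*s) = 1+r := by rw [ea]; field_simp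
  have hB : b/((1/2)*s) = 1-r := by rw [eb]; field_simp
  rw [hA, hB]
  set L1 := Real.log (1+r)
  set L2 := Real.log (1-r)
  have hcore := core_ineq r hr
  have hmul := mul_le_mul_of_nonneg_left hcore (by linarith : (0:ℝ) ≤ s/2)
  have e3 : a * L1 = s/2*((1+r)*L1) := by rw [ea]; ring
  have e4 : b * L2 = s/2*((1-r)*L2) := by rw [eb]; ring
  have e5 : (a-b)^2/(2*s) = s/2*r^2 := by
    rw [hrdef]; field_simp
  rw [e5]
  calc s/2*r^2 ≤ s/2*((1+r)*L1+(1-r)*L2) := hmul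
    _ = a * L1 + b * L2 := by rw [e3, e4]; ring

lemma kl_le_chi {α : Type*} [Fintype α] (P Q : α → ℝ) (hP : ∀ y, 0 ≤ P y)
    (hQ : ∀ y, 0 ≤ Q y) (h0 : ∀ y, Q y = 0 → P y = 0) (hs : ∑ y, P y = ∑ y, Q y) :
    ∑ y, P y * Real.log (P y / Q y) ≤ ∑ y, (P y - Q y)^2 / Q y := by
  have key : ∀ y, P y * Real.log (P y / Q y) ≤ (P y)^2/Q y - P y := by
    intro y
    rcases eq_or_lt_of_le (hQ y) with h | h
    · rw [h0 y h.symm]; simp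
    rcases eq_or_lt_of_le (hP y) with h2 | h2
    · rw [← h2]; simp
    have hlog : Real.log (P y / Q y) ≤ P y / Q y - 1 :=
      Real.log_le_sub_one_of_pos (by positivity)
    have := mul_le_mul_of_nonneg_left hlog (hP y)
    calc P y * Real.log (P y / Q y) ≤ P y * (P y / Q y - 1) := this
      _ = (P y)^2/Q y - P y := by field_simp
  have expand : ∀ y, (P y - Q y)^2 / Q y = (P y)^2/Q y - 2 * P y + Q y := by
    intro y
    rcases eq_or_lt_of_le (hQ y) with h | h
    · rw [h0 y h.symm, ← h]; simp
    · field_simp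
      ring
  have h1 : ∑ y, ((P y)^2/Q y - P y) = ∑ y, (P y)^2/Q y - ∑ y, P y :=
    Finset.sum_sub_distrib _ _
  have h2 : ∑ y, ((P y)^2/Q y - 2*P y + Q y)
      = ∑ y, (P y)^2/Q y - 2*∑ y, P y + ∑ y, Q y := by
    rw [Finset.sum_add_distrib, Finset.sum_sub_distrib, ← Finset.mul_sum]
  calc ∑ y, P y * Real.log (P y / Q y) ≤ ∑ y, ((P y)^2/Q y - P y) :=
        Finset.sum_le_sum (fun y _ => key y)
    _ = ∑ y, (P y - Q y)^2 / Q y := by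
        rw [Finset.sum_congr rfl (fun y _ => expand y), h1, h2]
        linarith

end Analytic

section MainCore

variable {k : ℕ} {𝒴 T : Type*} [Fintype 𝒴] [Fintype T]

/-- Per-prefix divergence bound. -/
lemma per_prefix_bound (hk : 1 ≤ k) (ε : ℝ) (hε : 0 < ε) (hε' : ε ≤ 1/2)
    (Wc : Fin (2*k) → 𝒴 → ℝ) (hW : IsChannel Wc) (B : ℝ) (hB0 : 0 ≤ B)
    (hBle : opNorm (HMat k Wc) ≤ B)
    (g : (Fin k → Bool) → ℝ) (hg0 : ∀ z, 0 ≤ g z) :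
    let c : ℝ := 1/2^k
    let q : ℝ := c * ∑ z, g z
    let Q : 𝒴 → ℝ := fun y => c * ∑ z, g z * (∑ x, paninski k ε z x * Wc x y)
    let u : 𝒴 → ℝ := fun y => ∑ x, (2*(k:ℝ))⁻¹ * Wc x y
    let α : Fin k → ℝ := fun i => c * ∑ z, pm (z i) * g z
    ∑ y, Q y * Real.log (Q y / (q * u y))
      ≤ (2*ε^2/(k:ℝ)) * B * ∑ i, (α i)^2 / q := by
  intro c q Q u α
  have hk0 : (0:ℝ) < (k:ℝ) := by exact_mod_cast (by omega : 0 < k)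
  have h2k0 : (0:ℝ) < 2*(k:ℝ) := by linarith
  have hc0 : (0:ℝ) < c := by positivity
  set S : 𝒴 → ℝ := fun y => ∑ x, Wc x y with hSdef
  set Δ : Fin k → 𝒴 → ℝ := fun i y => Wc (lo i) y - Wc (hi i) y with hΔdef
  have hS0 : ∀ y, 0 ≤ S y := fun y => Finset.sum_nonneg fun x _ => (hW x).1 y
  have hueq : ∀ y, u y = (2*(k:ℝ))⁻¹ * S y := fun y => (Finset.mul_sum _ _ _).symm
  have hu0 : ∀ y, 0 ≤ u y := fun y => Finset.sum_nonneg fun x _ =>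
    mul_nonneg (by positivity) ((hW x).1 y)
  have hu1 : ∑ y, u y = 1 := by
    rw [Finset.sum_comm]
    have : ∀ x, ∑ y, (2*(k:ℝ))⁻¹ * Wc x y = (2*(k:ℝ))⁻¹ := by
      intro x; rw [← Finset.mul_sum, (hW x).2, mul_one]
    rw [Finset.sum_congr rfl fun x _ => this x, Finset.sum_const, Finset.card_univ,
      Fintype.card_fin, nsmul_eq_mul]
    push_cast
    field_simp
  have hWzero : ∀ y, S y = 0 → ∀ x, Wc x y = 0 := by
    intro y hy x
    have := (Finset.sum_eq_zero_iff_of_nonneg (fun x _ => (hW x).1 y)).mp hy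
    exact this x (Finset.mem_univ x)
  have hΔsum : ∀ i, ∑ y, Δ i y = 0 := by
    intro i
    rw [hΔdef]
    simp only
    rw [Finset.sum_sub_distrib, (hW (lo i)).2, (hW (hi i)).2, sub_self]
  have hmix : ∀ z y, ∑ x, paninski k ε z x * Wc x y
      = u y + (ε/(k:ℝ)) * ∑ i, pm (z i) * Δ i y := by
    intro z y
    rw [sum_pair (g := fun x => paninski k ε z x * Wc x y)]
    have hux : u y = ∑ i : Fin k, ((2*(k:ℝ))⁻¹ * Wc (lo i) y + (2*(k:ℝ))⁻¹ * Wc (hi i) y) := by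
      exact sum_pair (g := fun x => (2*(k:ℝ))⁻¹ * Wc x y)
    rw [hux, Finset.mul_sum, ← Finset.sum_add_distrib]
    refine Finset.sum_congr rfl fun i _ => ?_
    rw [paninski_lo hk, paninski_hi hk, hΔdef]
    simp only
    ring
  have hQdecomp : ∀ y, Q y = q * u y + (ε/(k:ℝ)) * ∑ i, α i * Δ i y := by
    intro y
    show c * ∑ z, g z * (∑ x, paninski k ε z x * Wc x y) = _
    calc c * ∑ z, g z * (∑ x, paninski k ε z x * Wc x y)
        = c * ∑ z, (g z * u y + g z * ((ε/(k:ℝ)) * ∑ i, pm (z i) * Δ i y)) := by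
          congr 1
          exact Finset.sum_congr rfl fun z _ => by rw [hmix z y]; ring
      _ = c * ((∑ z, g z * u y) + ∑ z, g z * ((ε/(k:ℝ)) * ∑ i, pm (z i) * Δ i y)) := by
          rw [Finset.sum_add_distrib]
      _ = q * u y + (ε/(k:ℝ)) * ∑ i, α i * Δ i y := by
          rw [← Finset.sum_mul]
          have h2 : ∑ z, g z * ((ε/(k:ℝ)) * ∑ i, pm (z i) * Δ i y)
              = (ε/(k:ℝ)) * ∑ i, ((∑ z, pm (z i) * g z) * Δ i y) := by
            simp only [Finset.mul_sum, Finset.sum_mul]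
            rw [Finset.sum_comm]
            refine Finset.sum_congr rfl fun i _ => Finset.sum_congr rfl fun z _ => by ring
          rw [h2, mul_add]
          congr 1
          · show c * ((∑ z, g z) * u y) = (c * ∑ z, g z) * u y
            ring
          · simp only [Finset.mul_sum]
            refine Finset.sum_congr rfl fun i _ => ?_
            rw [show α i = c * ∑ z, pm (z i) * g z from rfl]
            ring
  have hQ0 : ∀ y, 0 ≤ Q y := by
    intro y
    apply mul_nonneg hc0.le
    refine Finset.sum_nonneg fun z _ => mul_nonneg (hg0 z) (Finset.sum_nonneg fun x _ =>
      mul_nonneg ((paninski_isDist hk ε hε hε' z).1 x) ((hW x).1 y))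
  have hq0 : 0 ≤ q := mul_nonneg hc0.le (Finset.sum_nonneg fun z _ => hg0 z)
  by_cases hq : q = 0
  · have hgz : ∀ z, g z = 0 := by
      have hsum : ∑ z, g z = 0 := by
        rcases mul_eq_zero.mp hq with h | h
        · exact absurd h (ne_of_gt hc0)
        · exact h
      intro z
      exact (Finset.sum_eq_zero_iff_of_nonneg (fun z _ => hg0 z)).mp hsum z (Finset.mem_univ z)
    have hQz : ∀ y, Q y = 0 := by
      intro y
      show c * ∑ z, g z * _ = 0
      rw [Finset.sum_eq_zero (fun z _ => by rw [hgz z, zero_mul]), mul_zero]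
    have hαz : ∀ i : Fin k, α i = 0 := by
      intro i
      show c * ∑ z, pm (z i) * g z = 0
      rw [Finset.sum_eq_zero (fun z _ => by rw [hgz z, mul_zero]), mul_zero]
    rw [Finset.sum_eq_zero (fun y _ => by rw [hQz y, zero_mul])]
    apply mul_nonneg (mul_nonneg (by positivity) hB0)
    refine Finset.sum_nonneg fun i _ => ?_
    rw [hαz i]
    positivity
  · have hqpos : 0 < q := lt_of_le_of_ne hq0 (Ne.symm hq)
    have hsumQ : ∑ y, Q y = q := by
      rw [Finset.sum_congr rfl fun y _ => hQdecomp y, Finset.sum_add_distrib, ← Finset.mul_sum,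
        hu1, mul_one]
      have hzero : ∑ y, (ε/(k:ℝ)) * ∑ i, α i * Δ i y = 0 := by
        rw [← Finset.mul_sum, Finset.sum_comm]
        have hin : ∀ i : Fin k, ∑ y, α i * Δ i y = 0 := by
          intro i
          rw [← Finset.mul_sum, hΔsum i, mul_zero]
        rw [Finset.sum_congr rfl fun i _ => hin i, Finset.sum_const, smul_zero, mul_zero]
      rw [hzero, add_zero]
    have hstep1 : ∑ y, Q y * Real.log (Q y / (q * u y))
        ≤ ∑ y, (Q y - q * u y)^2 / (q * u y) := by
      apply kl_le_chi
      · exact hQ0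
      · intro y; exact mul_nonneg hq0 (hu0 y)
      · intro y hy
        rcases mul_eq_zero.mp hy with h | h
        · exact absurd h hq
        · have hSy : S y = 0 := by
            rw [hueq y] at h
            rcases mul_eq_zero.mp h with h' | h'
            · exact absurd h' (by positivity)
            · exact h'
          have hΔ0 : ∀ i : Fin k, Δ i y = 0 := fun i => by
            show Wc (lo i) y - Wc (hi i) y = 0
            rw [hWzero y hSy, hWzero y hSy, sub_self]
          rw [hQdecomp y, h, mul_zero, zero_add,
            Finset.sum_eq_zero (fun i _ => by rw [hΔ0 i, mul_zero]), mul_zero]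
      · rw [hsumQ, ← Finset.mul_sum, hu1, mul_one]
    have hstep2 : ∀ y, (Q y - q * u y)^2 / (q * u y)
        = (2*ε^2/(k:ℝ)) / q * ((∑ i, α i * Δ i y)^2 / S y) := by
      intro y
      have hnum : Q y - q * u y = (ε/(k:ℝ)) * ∑ i, α i * Δ i y := by
        rw [hQdecomp y]; ring
      rw [hnum, hueq y]
      rcases eq_or_lt_of_le (hS0 y) with h | h
      · have hΔ0 : ∀ i : Fin k, Δ i y = 0 := fun i => by
          show Wc (lo i) y - Wc (hi i) y = 0
          rw [hWzero y h.symm, hWzero y h.symm, sub_self]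
        rw [Finset.sum_eq_zero (fun i _ => by rw [hΔ0 i, mul_zero])]
        simp
      · have hSne : S y ≠ 0 := ne_of_gt h
        field_simp
    have hstep3 : ∑ y, (∑ i, α i * Δ i y)^2 / S y
        = ∑ i, α i * (HMat k Wc).mulVec α i := by
      calc ∑ y, (∑ i, α i * Δ i y)^2 / S y
          = ∑ y, ∑ i, ∑ j, α i * ((Δ i y * Δ j y / S y) * α j) := by
            refine Finset.sum_congr rfl fun y _ => ?_
            rw [sq, Finset.sum_mul_sum, Finset.sum_div]
            refine Finset.sum_congr rfl fun i _ => ?_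
            rw [Finset.sum_div]
            refine Finset.sum_congr rfl fun j _ => ?_
            rw [div_eq_mul_inv, div_eq_mul_inv]
            ring
        _ = ∑ i, ∑ j, α i * ((∑ y, Δ i y * Δ j y / S y) * α j) := by
            rw [Finset.sum_comm]
            refine Finset.sum_congr rfl fun i _ => ?_
            rw [Finset.sum_comm]
            refine Finset.sum_congr rfl fun j _ => ?_
            rw [Finset.sum_mul, Finset.mul_sum]
        _ = ∑ i, α i * (HMat k Wc).mulVec α i := by
            refine Finset.sum_congr rfl fun i _ => ?_
            rw [← Finset.mul_sum]
            rfl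
    have hherm := HMat_isHermitian k Wc
    have hstep4 : ∑ i, α i * (HMat k Wc).mulVec α i ≤ B * ∑ i, (α i)^2 :=
      le_trans (quadform (HMat k Wc) hherm α)
        (mul_le_mul_of_nonneg_right hBle (Finset.sum_nonneg fun i _ => sq_nonneg _))
    calc ∑ y, Q y * Real.log (Q y / (q * u y))
        ≤ ∑ y, (Q y - q * u y)^2 / (q * u y) := hstep1
      _ = (2*ε^2/(k:ℝ)) / q * ∑ y, (∑ i, α i * Δ i y)^2 / S y := by
          rw [Finset.sum_congr rfl fun y _ => hstep2 y, ← Finset.mul_sum]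
      _ = (2*ε^2/(k:ℝ)) / q * ∑ i, α i * (HMat k Wc).mulVec α i := by rw [hstep3]
      _ ≤ (2*ε^2/(k:ℝ)) / q * (B * ∑ i, (α i)^2) := by
          apply mul_le_mul_of_nonneg_left hstep4
          positivity
      _ = (2*ε^2/(k:ℝ)) * B * ∑ i, (α i)^2 / q := by
          rw [← Finset.sum_div]
          field_simp

end MainCore

section InfoCore

variable {k : ℕ} {𝒴 T : Type*} [Fintype 𝒴] [Fintype T]

lemma info_bound (hk : 1 ≤ k) (j : (Fin k → Bool) → T → ℝ)
    (hj0 : ∀ z s, 0 ≤ j z s) (hj1 : ∀ z, ∑ s, j z s = 1/2^k) (i : Fin k) :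
    ∑ s, (∑ z, pm (z i) * j z s)^2 / (∑ z, j z s)
      ≤ 2 * Real.log 2 * miBits (coordJoint j i) := by
  classical
  set a : T → ℝ := fun s => coordJoint j i true s with hadef
  set b : T → ℝ := fun s => coordJoint j i false s with hbdef
  have ha0 : ∀ s, 0 ≤ a s := fun s => Finset.sum_nonneg fun z _ => by
    split <;> [exact hj0 z s; exact le_refl 0]
  have hb0 : ∀ s, 0 ≤ b s := fun s => Finset.sum_nonneg fun z _ => by
    split <;> [exact hj0 z s; exact le_refl 0]
  have hab : ∀ s, a s + b s = ∑ z, j z s := by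
    intro s
    show (∑ z, if z i = true then j z s else 0) + (∑ z, if z i = false then j z s else 0) = _
    rw [← Finset.sum_add_distrib]
    refine Finset.sum_congr rfl fun z _ => ?_
    cases hz : z i <;> simp [hz]
  have hsub : ∀ s, a s - b s = ∑ z, pm (z i) * j z s := by
    intro s
    show (∑ z, if z i = true then j z s else 0) - (∑ z, if z i = false then j z s else 0) = _
    rw [← Finset.sum_sub_distrib]
    refine Finset.sum_congr rfl fun z _ => ?_
    cases hz : z i <;> simp [hz, pm]
  have hmarg : ∀ bo : Bool, ∑ s, coordJoint j i bo s = 1/2 := by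
    intro bo
    simp only [coordJoint]
    rw [Finset.sum_comm]
    have hin : ∀ z : Fin k → Bool, ∑ s, (if z i = bo then j z s else 0)
        = (if z i = bo then (1/2^k : ℝ) else 0) := by
      intro z
      by_cases h : z i = bo <;> simp [h, hj1 z]
    rw [Finset.sum_congr rfl fun z _ => hin z, count_half hk i bo]
    have h2k : (2:ℝ)^k = 2 * 2^(k-1) := by
      rw [← pow_succ']
      congr 1
      omega
    rw [h2k]
    have : ((2:ℝ)^(k-1)) ≠ 0 := by positivity
    field_simp
  have hmiNats : miNats (coordJoint j i)
      = ∑ s, (a s * Real.log (a s / ((1/2) * (a s + b s)))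
        + b s * Real.log (b s / ((1/2) * (a s + b s)))) := by
    rw [miNats, Fintype.sum_bool]
    rw [Finset.sum_add_distrib]
    congr 1
    · exact Finset.sum_congr rfl fun s _ => by rw [hmarg true, Fintype.sum_bool]
    · exact Finset.sum_congr rfl fun s _ => by rw [hmarg false, Fintype.sum_bool]
  have hptwise : ∀ s, (a s - b s)^2 / (a s + b s)
      ≤ 2 * (a s * Real.log (a s / ((1/2) * (a s + b s)))
        + b s * Real.log (b s / ((1/2) * (a s + b s)))) := by
    intro s
    have hbp := binPinsker (a s) (b s) (ha0 s) (hb0 s)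
    calc (a s - b s)^2 / (a s + b s) = 2 * ((a s - b s)^2 / (2 * (a s + b s))) := by
          rcases eq_or_lt_of_le (by linarith [ha0 s, hb0 s] : (0:ℝ) ≤ a s + b s) with h | h
          · rw [← h]; simp
          · field_simp
      _ ≤ _ := by linarith
  have hmain : ∑ s, (∑ z, pm (z i) * j z s)^2 / (∑ z, j z s)
      ≤ 2 * miNats (coordJoint j i) := by
    rw [hmiNats, Finset.mul_sum]
    refine Finset.sum_le_sum fun s _ => ?_
    rw [← hsub s, ← hab s]
    exact hptwise s
  have hlog2 : (0:ℝ) < Real.log 2 := Real.log_pos (by norm_num)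
  have hconv : miNats (coordJoint j i) = Real.log 2 * miBits (coordJoint j i) := by
    rw [miBits_eq_miNats]
    field_simp
  calc ∑ s, (∑ z, pm (z i) * j z s)^2 / (∑ z, j z s)
      ≤ 2 * miNats (coordJoint j i) := hmain
    _ = 2 * Real.log 2 * miBits (coordJoint j i) := by rw [hconv]; ring

lemma main_core (hk : 1 ≤ k) (ε : ℝ) (hε : 0 < ε) (hε' : ε ≤ 1/2)
    (W : T → Fin (2*k) → 𝒴 → ℝ) (hW : ∀ s, IsChannel (W s))
    (B : ℝ) (hB0 : 0 ≤ B) (hBle : ∀ s, opNorm (HMat k (W s)) ≤ B)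
    (g : (Fin k → Bool) → T → ℝ) (hg0 : ∀ z s, 0 ≤ g z s) (hg1 : ∀ z, ∑ s, g z s = 1) :
    ∑ s, ∑ y, ((1/2^k : ℝ) * ∑ z, g z s * (∑ x, paninski k ε z x * W s x y)) *
      Real.log (((1/2^k : ℝ) * ∑ z, g z s * (∑ x, paninski k ε z x * W s x y)) /
        (((1/2^k : ℝ) * ∑ z, g z s) * (∑ x, (2*(k:ℝ))⁻¹ * W s x y)))
    ≤ 4 * Real.log 2 * (ε^2/(k:ℝ)) * B *
        ∑ i : Fin k, miBits (coordJoint (fun z s => (1/2^k : ℝ) * g z s) i) := by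
  classical
  have hk0 : (0:ℝ) < (k:ℝ) := by exact_mod_cast (by omega : 0 < k)
  have hc0 : (0:ℝ) < (1/2^k : ℝ) := by positivity
  have hstepA : ∀ s : T, ∑ y, ((1/2^k : ℝ) * ∑ z, g z s * (∑ x, paninski k ε z x * W s x y)) *
      Real.log (((1/2^k : ℝ) * ∑ z, g z s * (∑ x, paninski k ε z x * W s x y)) /
        (((1/2^k : ℝ) * ∑ z, g z s) * (∑ x, (2*(k:ℝ))⁻¹ * W s x y)))
      ≤ (2*ε^2/(k:ℝ)) * B * ∑ i : Fin k,
          ((1/2^k : ℝ) * ∑ z, pm (z i) * g z s)^2 / ((1/2^k : ℝ) * ∑ z, g z s) := by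
    intro s
    exact per_prefix_bound hk ε hε hε' (W s) (hW s) B hB0 (hBle s)
      (fun z => g z s) (fun z => hg0 z s)
  have hstepB : ∀ i : Fin k,
      ∑ s, ((1/2^k : ℝ) * ∑ z, pm (z i) * g z s)^2 / ((1/2^k : ℝ) * ∑ z, g z s)
      ≤ 2 * Real.log 2 * miBits (coordJoint (fun z s => (1/2^k : ℝ) * g z s) i) := by
    intro i
    have := info_bound hk (fun z s => (1/2^k : ℝ) * g z s)
      (fun z s => mul_nonneg hc0.le (hg0 z s))
      (fun z => by rw [← Finset.mul_sum, hg1 z, mul_one]) i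
    calc ∑ s, ((1/2^k : ℝ) * ∑ z, pm (z i) * g z s)^2 / ((1/2^k : ℝ) * ∑ z, g z s)
        = ∑ s, (∑ z, pm (z i) * ((1/2^k : ℝ) * g z s))^2 / (∑ z, (1/2^k : ℝ) * g z s) := by
          refine Finset.sum_congr rfl fun s _ => ?_
          rw [← Finset.mul_sum]
          congr 2
          rw [Finset.mul_sum]
          exact Finset.sum_congr rfl fun z _ => by ring
      _ ≤ _ := this
  calc ∑ s, ∑ y, ((1/2^k : ℝ) * ∑ z, g z s * (∑ x, paninski k ε z x * W s x y)) *
      Real.log (((1/2^k : ℝ) * ∑ z, g z s * (∑ x, paninski k ε z x * W s x y)) /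
        (((1/2^k : ℝ) * ∑ z, g z s) * (∑ x, (2*(k:ℝ))⁻¹ * W s x y)))
      ≤ ∑ s, (2*ε^2/(k:ℝ)) * B * ∑ i : Fin k,
          ((1/2^k : ℝ) * ∑ z, pm (z i) * g z s)^2 / ((1/2^k : ℝ) * ∑ z, g z s) :=
        Finset.sum_le_sum fun s _ => hstepA s
    _ = (2*ε^2/(k:ℝ)) * B * ∑ i : Fin k, ∑ s,
          ((1/2^k : ℝ) * ∑ z, pm (z i) * g z s)^2 / ((1/2^k : ℝ) * ∑ z, g z s) := by
        rw [← Finset.mul_sum, Finset.sum_comm]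
    _ ≤ (2*ε^2/(k:ℝ)) * B * ∑ i : Fin k,
          2 * Real.log 2 * miBits (coordJoint (fun z s => (1/2^k : ℝ) * g z s) i) := by
        apply mul_le_mul_of_nonneg_left (Finset.sum_le_sum fun i _ => hstepB i)
        positivity
    _ = 4 * Real.log 2 * (ε^2/(k:ℝ)) * B *
          ∑ i : Fin k, miBits (coordJoint (fun z s => (1/2^k : ℝ) * g z s) i) := by
        rw [← Finset.mul_sum]
        ring

end InfoCore

/-- Per-round divergence bound: for a deterministic sequentially
interactive protocol using `𝒲`, with `Z` uniform on `{−1,+1}^k` and inputs i.i.d.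
`p_Z` given `Z` (mixture transcript law `q`), for every `0 ≤ t ≤ n−1`,
`E_{Y^t∼q}[ KL( q(Y_{t+1} ∈ · | Y^t) ‖ u(· | Y^t) ) ]
  ≤ 4 ln 2 · (ε²/k) · ‖𝒲‖_op · Σᵢ I(Z_i; Y^t)`,
where `u(·|y^t)` is the law of the next message for a uniform input, KL is in nats,
and the mutual information is in bits. The expected KL divergence is written as
`Σ_{y^t, y} q^{t+1}(y^t ⌢ y) ln( q^{t+1}(y^t ⌢ y) / (q^t(y^t) · u(y|y^t)) )`. -/
theorem per_round_divergence_bound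
    (k n : ℕ) (hk : 1 ≤ k) (ε : ℝ) (hε : 0 < ε) (hε' : ε ≤ 1 / 2)
    (𝒴 : Type) [Fintype 𝒴]
    (𝒲 : Set (Fin (2 * k) → 𝒴 → ℝ)) (h𝒲 : ∀ W ∈ 𝒲, IsChannel W)
    (π : Protocol k n 𝒴) (hπ : UsesFamily π 𝒲) (hch : ChannelProtocol π)
    (t : ℕ) (ht : t < n) :
    ∑ ys : Fin t → 𝒴, ∑ y : 𝒴,
        ((1 / 2 ^ k : ℝ) * ∑ z : Fin k → Bool,
            prefixDist π (paninski k ε z) (t + 1) ht (Fin.snoc ys y)) *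
          Real.log
            (((1 / 2 ^ k : ℝ) * ∑ z : Fin k → Bool,
                prefixDist π (paninski k ε z) (t + 1) ht (Fin.snoc ys y)) /
              (((1 / 2 ^ k : ℝ) * ∑ z : Fin k → Bool,
                  prefixDist π (paninski k ε z) t ht.le ys) *
                (∑ x, (2 * (k : ℝ))⁻¹ * π ⟨t, ht⟩ ys x y)))
      ≤ 4 * Real.log 2 * (ε ^ 2 / (k : ℝ)) * famOp k 𝒲 *
          ∑ i : Fin k, miBits (coordJoint
            (fun z ys => (1 / 2 ^ k : ℝ) * prefixDist π (paninski k ε z) t ht.le ys) i) := by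
  classical
  have h𝒴 : Nonempty 𝒴 := by
    by_contra hcon
    rw [not_nonempty_iff] at hcon
    have h0n : 0 < n := by omega
    have hch0 := (hch ⟨0, h0n⟩ (fun r => r.elim0) ⟨0, by omega⟩).2
    rw [Finset.univ_eq_empty, Finset.sum_empty] at hch0
    exact zero_ne_one hch0
  have hbdd : BddAbove ((fun W => opNorm (HMat k W)) '' 𝒲) := by
    refine ⟨(k:ℝ) * 2, ?_⟩
    rintro r ⟨V, hV, rfl⟩
    exact opNorm_le (HMat k V) (HMat_isHermitian k V) 2
      (fun i j => HMat_entry_bound k V (h𝒲 V hV) i j) (by omega)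
  have hWmem : ∀ ys : Fin t → 𝒴, π ⟨t, ht⟩ ys ∈ 𝒲 := fun ys => hπ ⟨t, ht⟩ ys
  have hB0 : 0 ≤ famOp k 𝒲 := by
    have hys : Fin t → 𝒴 := fun _ => h𝒴.some
    calc (0:ℝ) ≤ opNorm (HMat k (π ⟨t,ht⟩ hys)) := opNorm_nonneg _
      _ ≤ famOp k 𝒲 := le_csSup hbdd ⟨_, hWmem hys, rfl⟩
  have hBle : ∀ ys : Fin t → 𝒴, opNorm (HMat k (π ⟨t,ht⟩ ys)) ≤ famOp k 𝒲 :=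
    fun ys => le_csSup hbdd ⟨_, hWmem ys, rfl⟩
  have hsnoc : ∀ (z : Fin k → Bool) (ys : Fin t → 𝒴) (y : 𝒴),
      prefixDist π (paninski k ε z) (t+1) ht (Fin.snoc ys y)
      = prefixDist π (paninski k ε z) t ht.le ys * ∑ x, paninski k ε z x * π ⟨t,ht⟩ ys x y :=
    fun z ys y => prefixDist_snoc π (paninski k ε z) t ht ys y
  have hmain := main_core (T := Fin t → 𝒴) hk ε hε hε' (fun ys => π ⟨t,ht⟩ ys)
      (fun ys => hch ⟨t,ht⟩ ys) (famOp k 𝒲) hB0 hBle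
      (fun z ys => prefixDist π (paninski k ε z) t ht.le ys)
      (fun z ys => prefixDist_nonneg π hch _ (paninski_isDist hk ε hε hε' z).1 t ht.le ys)
      (fun z => prefixDist_sum_one π hch _ (paninski_isDist hk ε hε hε' z) t ht.le)
  calc ∑ ys : Fin t → 𝒴, ∑ y : 𝒴,
        ((1 / 2 ^ k : ℝ) * ∑ z : Fin k → Bool,
            prefixDist π (paninski k ε z) (t + 1) ht (Fin.snoc ys y)) *
          Real.log
            (((1 / 2 ^ k : ℝ) * ∑ z : Fin k → Bool,
                prefixDist π (paninski k ε z) (t + 1) ht (Fin.snoc ys y)) /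
              (((1 / 2 ^ k : ℝ) * ∑ z : Fin k → Bool,
                  prefixDist π (paninski k ε z) t ht.le ys) *
                (∑ x, (2 * (k : ℝ))⁻¹ * π ⟨t, ht⟩ ys x y)))
      = ∑ ys : Fin t → 𝒴, ∑ y : 𝒴,
        ((1 / 2 ^ k : ℝ) * ∑ z : Fin k → Bool,
            prefixDist π (paninski k ε z) t ht.le ys *
              ∑ x, paninski k ε z x * π ⟨t,ht⟩ ys x y) *
          Real.log
            (((1 / 2 ^ k : ℝ) * ∑ z : Fin k → Bool,
                prefixDist π (paninski k ε z) t ht.le ys *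
                  ∑ x, paninski k ε z x * π ⟨t,ht⟩ ys x y) /
              (((1 / 2 ^ k : ℝ) * ∑ z : Fin k → Bool,
                  prefixDist π (paninski k ε z) t ht.le ys) *
                (∑ x, (2 * (k : ℝ))⁻¹ * π ⟨t, ht⟩ ys x y))) := by
        refine Finset.sum_congr rfl fun ys _ => Finset.sum_congr rfl fun y _ => ?_
        rw [Finset.sum_congr rfl fun z _ => hsnoc z ys y]
    _ ≤ _ := hmain

end Paper
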